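/- For every integer n ≥ 2, the function G(t) = [F_{n-1}(F_n^{-1}(t))]^{n/(n-1)} is concave on [0, ∞), where F_m(t) = ∫_0^t r^{m-1}/(1-r^2)^m dr for t ∈ [0,1). -/

import Mathlib

open Real Set

private lemma myF_deriv (F : ℕ → ℝ → ℝ)
    (hF : ∀ m t, F m t = ∫ r in (0:ℝ)..t, r ^ (m - 1) / (1 - r ^ 2) ^ m)
    (k : ℕ) {x : ℝ} (hx : x ∈ Ioo (-1:ℝ) 1) :
    HasDerivAt (F k) (x ^ (k - 1) / (1 - x ^ 2) ^ k) x := by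
  have hFk : F k = fun t => ∫ r in (0:ℝ)..t, r ^ (k - 1) / (1 - r ^ 2) ^ k :=
    funext (hF k)
  rw [hFk]
  set c : ℝ → ℝ := fun r => r ^ (k - 1) / (1 - r ^ 2) ^ k with hc
  have hcont : ContinuousOn c (Ioo (-1:ℝ) 1) := by
    apply ContinuousOn.div
    · exact (continuous_pow _).continuousOn
    · exact ((continuous_const.sub (continuous_pow 2)).pow _).continuousOn
    · intro r hr
      have h1 : 0 < 1 - r ^ 2 := by nlinarith [hr.1, hr.2]
      positivity
  have h0 : (0:ℝ) ∈ Ioo (-1:ℝ) 1 := by norm_num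
  have hsub : uIcc (0:ℝ) x ⊆ Ioo (-1:ℝ) 1 := (ordConnected_Ioo).uIcc_subset h0 hx
  exact intervalIntegral.integral_hasDerivAt_right
    (hcont.mono hsub).intervalIntegrable
    (hcont.stronglyMeasurableAtFilter isOpen_Ioo x hx)
    (hcont.continuousAt (isOpen_Ioo.mem_nhds hx))

private lemma myF_zero (F : ℕ → ℝ → ℝ)
    (hF : ∀ m t, F m t = ∫ r in (0:ℝ)..t, r ^ (m - 1) / (1 - r ^ 2) ^ m)
    (k : ℕ) : F k 0 = 0 := by
  rw [hF]; simp

private lemma myF_key (F : ℕ → ℝ → ℝ)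
    (hF : ∀ m t, F m t = ∫ r in (0:ℝ)..t, r ^ (m - 1) / (1 - r ^ 2) ^ m)
    (m : ℕ) {x : ℝ} (hx : x ∈ Ico (0:ℝ) 1) :
    x ^ (m + 1) * (1 - x ^ 2) / (((m:ℝ) + 1) * (1 + x ^ 2) * (1 - x ^ 2) ^ (m + 1))
      ≤ F (m + 1) x := by
  set ψ : ℝ → ℝ := fun y =>
    F (m + 1) y - y ^ (m + 1) * (1 - y ^ 2) / (((m:ℝ) + 1) * (1 + y ^ 2) * (1 - y ^ 2) ^ (m + 1))
    with hψ
  have hIco : Ico (0:ℝ) 1 ⊆ Ioo (-1:ℝ) 1 := fun y hy => ⟨by linarith [hy.1], hy.2⟩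
  have hder : ∀ y ∈ Ioo (-1:ℝ) 1, HasDerivAt ψ
      (4 * y ^ (m + 2) / (((m:ℝ) + 1) * (1 + y ^ 2) ^ 2 * (1 - y ^ 2) ^ (m + 1))) y := by
    intro y hy
    have hy2 : 0 < 1 - y ^ 2 := by nlinarith [hy.1, hy.2]
    have hy1 : 0 < 1 + y ^ 2 := by positivity
    have hFd := myF_deriv F hF (m + 1) hy
    have hu : HasDerivAt (fun y : ℝ => y ^ (m + 1) * (1 - y ^ 2))
        (((m:ℝ) + 1) * y ^ m * (1 - y ^ 2) + y ^ (m + 1) * (-(2 * y))) y := by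
      have h1 : HasDerivAt (fun y : ℝ => y ^ (m + 1)) (((m:ℝ) + 1) * y ^ m) y := by
        simpa using hasDerivAt_pow (m + 1) y
      have h2 : HasDerivAt (fun y : ℝ => 1 - y ^ 2) (-(2 * y)) y := by
        simpa using (hasDerivAt_pow 2 y).const_sub 1
      exact h1.mul h2
    have hv : HasDerivAt (fun y : ℝ => ((m:ℝ) + 1) * (1 + y ^ 2) * (1 - y ^ 2) ^ (m + 1))
        (((m:ℝ) + 1) * ((2 * y) * (1 - y ^ 2) ^ (m + 1)
          + (1 + y ^ 2) * (((m:ℝ) + 1) * (1 - y ^ 2) ^ m * (-(2 * y))))) y := by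
      have h2 : HasDerivAt (fun y : ℝ => 1 + y ^ 2) (2 * y) y := by
        simpa using (hasDerivAt_pow 2 y).const_add 1
      have h3 : HasDerivAt (fun y : ℝ => (1 - y ^ 2) ^ (m + 1))
          (((m:ℝ) + 1) * (1 - y ^ 2) ^ m * (-(2 * y))) y := by
        have hb : HasDerivAt (fun y : ℝ => 1 - y ^ 2) (-(2 * y)) y := by
          simpa using (hasDerivAt_pow 2 y).const_sub 1
        have := (hasDerivAt_pow (m + 1) ((1:ℝ) - y ^ 2)).comp y hb
        exact this.congr_deriv (by rw [Nat.add_sub_cancel]; push_cast; ring)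
      have hfun : (fun y : ℝ => ((m:ℝ) + 1) * (1 + y ^ 2) * (1 - y ^ 2) ^ (m + 1))
          = fun y : ℝ => ((m:ℝ) + 1) * ((1 + y ^ 2) * (1 - y ^ 2) ^ (m + 1)) := by
        funext y; ring
      rw [hfun]
      have := (h2.mul h3).const_mul ((m:ℝ) + 1)
      exact this
    have hvne : ((m:ℝ) + 1) * (1 + y ^ 2) * (1 - y ^ 2) ^ (m + 1) ≠ 0 := by positivity
    have hR := hu.div hv hvne
    have := hFd.sub hR
    refine this.congr_deriv ?_
    have hm1 : ((m:ℝ) + 1) ≠ 0 := by positivity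
    have h12 : (1:ℝ) + y ^ 2 ≠ 0 := ne_of_gt hy1
    have h22 : (1:ℝ) - y ^ 2 ≠ 0 := ne_of_gt hy2
    have hyne : ((m + 1 : ℕ) : ℝ) = (m:ℝ) + 1 := by push_cast; ring
    rw [Nat.add_sub_cancel]
    field_simp
    ring
  have hmono : MonotoneOn ψ (Ico (0:ℝ) 1) := by
    apply monotoneOn_of_hasDerivWithinAt_nonneg (convex_Ico 0 1)
      (f' := fun y => 4 * y ^ (m + 2) / (((m:ℝ) + 1) * (1 + y ^ 2) ^ 2 * (1 - y ^ 2) ^ (m + 1)))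
    · intro y hy
      exact ((hder y (hIco hy)).continuousAt).continuousWithinAt
    · intro y hy
      rw [interior_Ico] at hy
      exact (hder y (hIco (Ioo_subset_Ico_self hy))).hasDerivWithinAt
    · intro y hy
      rw [interior_Ico] at hy
      have hy2 : 0 < 1 - y ^ 2 := by nlinarith [hy.1, hy.2]
      have hy0 : 0 ≤ y := hy.1.le
      positivity
  have h0 : ψ 0 = 0 := by
    simp [hψ, myF_zero F hF]
  have := hmono (by constructor <;> norm_num) hx hx.1
  rw [h0] at this
  simpa [hψ, sub_nonneg] using this

theorem stmt0 (n : ℕ) (hn : 2 ≤ n)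
    (F : ℕ → ℝ → ℝ)
    (hF : ∀ m t, F m t = ∫ r in (0:ℝ)..t, r ^ (m - 1) / (1 - r ^ 2) ^ m)
    (Finv : ℝ → ℝ)
    (hFinv : ∀ t ∈ Ici (0:ℝ), Finv t ∈ Ico (0:ℝ) 1 ∧ F n (Finv t) = t) :
    ConcaveOn ℝ (Ici 0) (fun t => (F (n - 1) (Finv t)) ^ ((n : ℝ) / ((n : ℝ) - 1))) := by
  obtain ⟨m, rfl⟩ : ∃ m, n = m + 2 := ⟨n - 2, by omega⟩
  clear hn
  set p : ℝ := ((m:ℝ) + 2) / ((m:ℝ) + 1) with hp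
  have hsub1 : m + 2 - 1 = m + 1 := rfl
  have hexp : ((m + 2 : ℕ) : ℝ) / (((m + 2 : ℕ) : ℝ) - 1) = p := by
    rw [hp]; push_cast; congr 1; ring
  rw [hsub1, hexp]
  have hp1 : 1 < p := by
    rw [hp, lt_div_iff₀ (by positivity)]; linarith
  have hq : p - 1 = 1 / ((m:ℝ) + 1) := by
    rw [hp]; field_simp; norm_num
  have hIco : Ico (0:ℝ) 1 ⊆ Ioo (-1:ℝ) 1 := fun y hy => ⟨by linarith [hy.1], hy.2⟩
  have hmem : ∀ t ∈ Ici (0:ℝ), Finv t ∈ Ico (0:ℝ) 1 := fun t ht => (hFinv t ht).1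
  have hfg : ∀ t ∈ Ici (0:ℝ), F (m + 2) (Finv t) = t := fun t ht => (hFinv t ht).2
  have hcontF : ∀ k, ContinuousOn (F k) (Ico (0:ℝ) 1) := fun k y hy =>
    ((myF_deriv F hF k (hIco hy)).continuousAt).continuousWithinAt
  -- strict monotonicity of F (m+2) and F (m+1) on [0,1)
  have hmono : ∀ k, StrictMonoOn (F (k + 1)) (Ico (0:ℝ) 1) := by
    intro k
    apply strictMonoOn_of_hasDerivWithinAt_pos (convex_Ico 0 1) (hcontF (k + 1))
      (f' := fun y => y ^ (k + 1 - 1) / (1 - y ^ 2) ^ (k + 1))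
    · intro y hy
      rw [interior_Ico] at hy
      exact (myF_deriv F hF (k + 1) (hIco (Ioo_subset_Ico_self hy))).hasDerivWithinAt
    · intro y hy
      rw [interior_Ico] at hy
      have h2 : 0 < 1 - y ^ 2 := by nlinarith [hy.1, hy.2]
      have h0 : 0 < y := hy.1
      positivity
  have hF2nonneg : ∀ x ∈ Ico (0:ℝ) 1, 0 ≤ F (m + 2) x := by
    intro x hx
    have := (hmono (m + 1)).monotoneOn (by constructor <;> norm_num) hx hx.1
    rwa [show m + 1 + 1 = m + 2 from rfl, myF_zero F hF] at this
  have hgf : ∀ x ∈ Ico (0:ℝ) 1, Finv (F (m + 2) x) = x := by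
    intro x hx
    have h1 : F (m + 2) x ∈ Ici (0:ℝ) := hF2nonneg x hx
    have h2 := hfg _ h1
    exact (hmono (m + 1)).injOn (hmem _ h1) hx h2
  have hFinv_mono : StrictMonoOn Finv (Ici (0:ℝ)) := by
    intro a ha b hb hab
    by_contra hcon
    push_neg at hcon
    have := (hmono (m + 1)).monotoneOn (hmem b hb) (hmem a ha) hcon
    rw [show m + 1 + 1 = m + 2 from rfl, hfg a ha, hfg b hb] at this
    linarith
  -- Finv positive for t > 0
  have hFinv_pos : ∀ t : ℝ, 0 < t → 0 < Finv t := by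
    intro t ht
    rcases (hmem t ht.le).1.lt_or_eq with h | h
    · exact h
    · exfalso
      have := hfg t ht.le
      rw [← h, myF_zero F hF] at this
      linarith
  -- continuity of Finv
  have hright : ∀ t : ℝ, 0 ≤ t → ∀ b > Finv t, ∃ c ∈ Ici (0:ℝ), Finv c ∈ Ioc (Finv t) b := by
    intro t ht b hb
    set x := min b ((Finv t + 1) / 2) with hx
    have hxt : Finv t < x := lt_min hb (by linarith [(hmem t ht).2])
    have hx1 : x < 1 := min_lt_of_right_lt (by linarith [(hmem t ht).2])
    have hx0 : x ∈ Ico (0:ℝ) 1 := ⟨le_trans (hmem t ht).1 hxt.le, hx1⟩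
    refine ⟨F (m + 2) x, hF2nonneg x hx0, ?_⟩
    rw [hgf x hx0]
    exact ⟨hxt, min_le_left _ _⟩
  have hFinv_cont : ContinuousOn Finv (Ici (0:ℝ)) := by
    intro t ht
    rcases eq_or_lt_of_le (mem_Ici.mp ht) with h | h
    · -- t = 0
      subst h
      exact hFinv_mono.continuousWithinAt_right_of_exists_between self_mem_nhdsWithin
        (hright 0 le_rfl)
    · apply ContinuousAt.continuousWithinAt
      apply hFinv_mono.continuousAt_of_exists_between (Ici_mem_nhds h)
      · intro b hb
        have hFt : 0 < Finv t := hFinv_pos t h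
        set x := max b 0 with hx
        have hx0 : x ∈ Ico (0:ℝ) 1 := ⟨le_max_right _ _,
          lt_trans (max_lt hb hFt) (hmem t ht).2⟩
        refine ⟨F (m + 2) x, hF2nonneg x hx0, ?_⟩
        rw [hgf x hx0]
        exact ⟨le_max_left _ _, max_lt hb hFt⟩
      · exact hright t ht
  -- value of G at points, positivity of h
  have hApos : ∀ t : ℝ, 0 < t → 0 < F (m + 1) (Finv t) := by
    intro t ht
    have hx : Finv t ∈ Ico (0:ℝ) 1 := hmem t ht.le
    have := hmono m ⟨le_refl 0, by norm_num⟩ hx (hFinv_pos t ht)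
    rwa [myF_zero F hF] at this
  -- derivative of Finv at t > 0
  have hFinv_deriv : ∀ t : ℝ, 0 < t →
      HasDerivAt Finv ((Finv t ^ (m + 1) / (1 - Finv t ^ 2) ^ (m + 2))⁻¹) t := by
    intro t ht
    have hx : Finv t ∈ Ico (0:ℝ) 1 := hmem t ht.le
    have hxpos := hFinv_pos t ht
    have hx2 : 0 < 1 - Finv t ^ 2 := by nlinarith [hx.2]
    have hd := myF_deriv F hF (m + 2) (hIco hx)
    rw [hsub1] at hd
    have hdne : Finv t ^ (m + 1) / (1 - Finv t ^ 2) ^ (m + 2) ≠ 0 := by positivity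
    exact HasDerivAt.of_local_left_inverse
      (hFinv_cont.continuousAt (Ici_mem_nhds ht)) hd hdne
      (by filter_upwards [Ioi_mem_nhds ht] with y hy using hfg y (mem_Ici.mpr (le_of_lt (mem_Ioi.mp hy))))
  -- derivative of h := F (m+1) ∘ Finv at t > 0
  have hh_deriv : ∀ t : ℝ, 0 < t →
      HasDerivAt (fun s => F (m + 1) (Finv s)) ((1 - Finv t ^ 2) / Finv t) t := by
    intro t ht
    have hx : Finv t ∈ Ico (0:ℝ) 1 := hmem t ht.le
    have hxpos := hFinv_pos t ht
    have hx2 : 0 < 1 - Finv t ^ 2 := by nlinarith [hx.2]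
    have h1 := myF_deriv F hF (m + 1) (hIco hx)
    rw [Nat.add_sub_cancel] at h1
    have h2 := h1.comp t (hFinv_deriv t ht)
    have h3 : Finv t ^ m / (1 - Finv t ^ 2) ^ (m + 1)
        * (Finv t ^ (m + 1) / (1 - Finv t ^ 2) ^ (m + 2))⁻¹
        = (1 - Finv t ^ 2) / Finv t := by
      rw [inv_div]
      field_simp
      ring
    rw [← h3]
    exact h2
  -- main application
  have hint : interior (Ici (0:ℝ)) = Ioi 0 := interior_Ici
  refine concaveOn_of_hasDerivWithinAt2_nonpos (convex_Ici 0)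
    (f' := fun s => p * (F (m + 1) (Finv s) ^ (p - 1) * ((1 - Finv s ^ 2) / Finv s)))
    (f'' := fun s => p * (F (m + 1) (Finv s) ^ (p - 1 - 1) *
      ((p - 1) * ((1 - Finv s ^ 2) / Finv s) ^ 2
        - F (m + 1) (Finv s) *
          ((1 + Finv s ^ 2) * (1 - Finv s ^ 2) ^ (m + 2) / Finv s ^ (m + 3)))))
    ?_ ?_ ?_ ?_
  · -- continuity
    have hcA : ContinuousOn (fun s => F (m + 1) (Finv s)) (Ici (0:ℝ)) :=
      (hcontF (m + 1)).comp hFinv_cont hmem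
    exact hcA.rpow_const fun t ht => Or.inr (by positivity)
  · -- first derivative
    intro t ht
    rw [hint] at ht
    have hd := (hh_deriv t ht).rpow_const (p := p) (Or.inl (hApos t ht).ne')
    refine hd.hasDerivWithinAt.congr_deriv ?_
    show _ = p * (F (m + 1) (Finv t) ^ (p - 1) * ((1 - Finv t ^ 2) / Finv t))
    ring
  · -- second derivative
    intro t ht
    rw [hint] at ht
    have hx : Finv t ∈ Ico (0:ℝ) 1 := hmem t (mem_Ioi.mp ht).le
    have hxpos := hFinv_pos t ht
    have hx2 : 0 < 1 - Finv t ^ 2 := by nlinarith [hx.2]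
    have hAne : F (m + 1) (Finv t) ≠ 0 := (hApos t ht).ne'
    have hdF := hFinv_deriv t ht
    have hd2 : HasDerivAt (fun s => Finv s ^ 2)
        (2 * Finv t ^ 1 * (Finv t ^ (m + 1) / (1 - Finv t ^ 2) ^ (m + 2))⁻¹) t := hdF.pow 2
    have hdnum : HasDerivAt (fun s => 1 - Finv s ^ 2)
        (-(2 * Finv t ^ 1 * (Finv t ^ (m + 1) / (1 - Finv t ^ 2) ^ (m + 2))⁻¹)) t :=
      hd2.const_sub 1
    have hdw := hdnum.div hdF hxpos.ne'
    have hdApow := (hh_deriv t ht).rpow_const (p := p - 1) (Or.inl hAne)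
    have hprod := (hdApow.mul hdw).const_mul p
    refine hprod.hasDerivWithinAt.congr_deriv ?_
    simp only [Pi.div_apply]
    have hA1 : F (m + 1) (Finv t) ^ (p - 1)
        = F (m + 1) (Finv t) ^ (p - 1 - 1) * F (m + 1) (Finv t) := by
      rw [← Real.rpow_add_one hAne]
      congr 1
      ring
    rw [hA1, inv_div]
    field_simp
    ring
  · -- nonpositivity
    intro t ht
    rw [hint] at ht
    have hx : Finv t ∈ Ico (0:ℝ) 1 := hmem t (mem_Ioi.mp ht).le
    have hxpos := hFinv_pos t ht
    have hx2 : 0 < 1 - Finv t ^ 2 := by nlinarith [hx.2]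
    have hkey := myF_key F hF m hx
    have hmultpos : 0 < (1 + Finv t ^ 2) * (1 - Finv t ^ 2) ^ (m + 2) / Finv t ^ (m + 3) := by
      positivity
    have h1 : (p - 1) * ((1 - Finv t ^ 2) / Finv t) ^ 2
        = (Finv t ^ (m + 1) * (1 - Finv t ^ 2)
            / (((m:ℝ) + 1) * (1 + Finv t ^ 2) * (1 - Finv t ^ 2) ^ (m + 1)))
          * ((1 + Finv t ^ 2) * (1 - Finv t ^ 2) ^ (m + 2) / Finv t ^ (m + 3)) := by
      rw [hq]
      field_simp
      ring
    have h2 := mul_le_mul_of_nonneg_right hkey hmultpos.le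
    have hbr : (p - 1) * ((1 - Finv t ^ 2) / Finv t) ^ 2
        - F (m + 1) (Finv t) *
          ((1 + Finv t ^ 2) * (1 - Finv t ^ 2) ^ (m + 2) / Finv t ^ (m + 3)) ≤ 0 := by
      rw [h1]; linarith
    have hBpos : (0:ℝ) < F (m + 1) (Finv t) ^ (p - 1 - 1) :=
      Real.rpow_pos_of_pos (hApos t ht) _
    have hppos : (0:ℝ) ≤ p := by positivity
    exact mul_nonpos_of_nonneg_of_nonpos hppos
      (mul_nonpos_of_nonneg_of_nonpos hBpos.le hbr)
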